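/- arXiv:2106.07841 — 3 statements merged into one kernel-verified Lean document; each statement's English description precedes it below -/
import Mathlib

section
/- Let d, k be positive integers, H > 0, λ > 0. Let φ_1, …, φ_{k-1} ∈ ℝ^d with ‖φ_τ‖ ≤ 1 for all τ, and let y_1, …, y_{k-1} ∈ ℝ with 0 ≤ y_τ ≤ 2H for all τ. Set Λ = Σ_{τ=1}^{k-1} φ_τ φ_τᵀ + λ I_d. Then ‖ Λ^{-1} Σ_{τ=1}^{k-1} y_τ φ_τ ‖ ≤ 2H √(k d / λ). -/
open Matrix

private lemma sum_mulVec' {d n : ℕ} (A : Fin n → Matrix (Fin d) (Fin d) ℝ) (v : Fin d → ℝ) :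
    (∑ τ, A τ) *ᵥ v = ∑ τ, A τ *ᵥ v := by
  ext j
  simp only [mulVec, dotProduct, Matrix.sum_apply, Finset.sum_mul, Finset.sum_apply]
  rw [Finset.sum_comm]

private lemma dotProduct_sum' {d n : ℕ} (w : Fin d → ℝ) (f : Fin n → Fin d → ℝ) :
    w ⬝ᵥ (∑ τ, f τ) = ∑ τ, w ⬝ᵥ f τ := by
  simp [dotProduct, Finset.sum_apply, Finset.mul_sum]
  rw [Finset.sum_comm]

private lemma vecMulVec_mulVec' {d : ℕ} (a b v : Fin d → ℝ) :
    vecMulVec a b *ᵥ v = (b ⬝ᵥ v) • a := by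
  ext i
  simp [vecMulVec_apply, mulVec, dotProduct, Finset.mul_sum, mul_assoc, mul_comm, mul_left_comm]

/-- Boundedness of the ridge-regression weight vector: if `‖φ_τ‖ ≤ 1`, `0 ≤ y_τ ≤ 2H` and
`Λ = ∑ φ_τ φ_τᵀ + λ I`, then `‖Λ⁻¹ ∑ y_τ φ_τ‖ ≤ 2H √(kd/λ)`. -/
theorem stmt_7 (d k : ℕ) (hd : 0 < d) (hk : 0 < k) (H lam : ℝ) (hH : 0 < H)
    (hlam : 0 < lam)
    (φ : Fin (k - 1) → Fin d → ℝ) (hφ : ∀ τ, Real.sqrt (φ τ ⬝ᵥ φ τ) ≤ 1)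
    (y : Fin (k - 1) → ℝ) (hy : ∀ τ, 0 ≤ y τ ∧ y τ ≤ 2 * H) :
    let Λ : Matrix (Fin d) (Fin d) ℝ :=
      (∑ τ, vecMulVec (φ τ) (φ τ)) + lam • (1 : Matrix (Fin d) (Fin d) ℝ)
    Real.sqrt ((Λ⁻¹ *ᵥ ∑ τ, y τ • φ τ) ⬝ᵥ (Λ⁻¹ *ᵥ ∑ τ, y τ • φ τ))
      ≤ 2 * H * Real.sqrt (k * d / lam) := by
  intro Λ
  set s : Fin d → ℝ := ∑ τ, y τ • φ τ with hs
  set w : Fin d → ℝ := Λ⁻¹ *ᵥ s with hw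
  -- Λ is positive definite
  have hmulv : ∀ v : Fin d → ℝ, Λ *ᵥ v = (∑ τ, (φ τ ⬝ᵥ v) • φ τ) + lam • v := by
    intro v
    show ((∑ τ, vecMulVec (φ τ) (φ τ)) + lam • 1) *ᵥ v = _
    rw [add_mulVec, sum_mulVec', smul_mulVec, one_mulVec]
    congr 1
    exact Finset.sum_congr rfl fun τ _ => vecMulVec_mulVec' _ _ _
  have hquad : ∀ v : Fin d → ℝ,
      v ⬝ᵥ (Λ *ᵥ v) = (∑ τ, (φ τ ⬝ᵥ v) * (v ⬝ᵥ φ τ)) + lam * (v ⬝ᵥ v) := by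
    intro v
    rw [hmulv, dotProduct_add, dotProduct_sum', dotProduct_smul]
    congr 1
    exact Finset.sum_congr rfl fun τ _ => by rw [dotProduct_smul, smul_eq_mul]
  have hselfnn : ∀ v : Fin d → ℝ, 0 ≤ v ⬝ᵥ v := fun v =>
    Finset.sum_nonneg fun i _ => mul_self_nonneg _
  have hpd : Λ.PosDef := by
    refine posDef_iff_dotProduct_mulVec.mpr ⟨?_, ?_⟩
    · ext i j
      simp only [Λ, conjTranspose_apply, Matrix.add_apply, Matrix.sum_apply,
        vecMulVec_apply, Matrix.smul_apply, Matrix.one_apply, star_trivial, smul_eq_mul]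
      have h1 : (∑ x, φ x j * φ x i) = ∑ x, φ x i * φ x j :=
        Finset.sum_congr rfl fun τ _ => mul_comm _ _
      rw [h1]
      rcases eq_or_ne i j with h | h
      · simp [h]
      · simp [h, h.symm]
    · intro v hv
      have hv2 : 0 < v ⬝ᵥ v := by
        rcases (hselfnn v).lt_or_eq with h | h
        · exact h
        · exfalso; apply hv; ext i
          by_contra hne
          have : 0 < v ⬝ᵥ v := Finset.sum_pos'
            (fun i _ => mul_self_nonneg _)
            ⟨i, Finset.mem_univ i, (mul_self_pos).2 hne⟩
          linarith
      have : star v ⬝ᵥ Λ *ᵥ v = v ⬝ᵥ (Λ *ᵥ v) := by simp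
      rw [this, hquad]
      have h1 : 0 ≤ ∑ τ, (φ τ ⬝ᵥ v) * (v ⬝ᵥ φ τ) :=
        Finset.sum_nonneg fun τ _ => by
          rw [dotProduct_comm (φ τ) v]; exact mul_self_nonneg _
      nlinarith
  have hΛw : Λ *ᵥ w = s := by
    rw [hw, mulVec_mulVec, Matrix.mul_nonsing_inv _ hpd.det_pos.ne'.isUnit, one_mulVec]
  -- quadratic form value Q
  set a : Fin (k - 1) → ℝ := fun τ => w ⬝ᵥ φ τ with ha
  set A : ℝ := ∑ τ, (a τ) ^ 2 with hA
  set N : ℝ := w ⬝ᵥ w with hN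
  set Q : ℝ := A + lam * N with hQ
  have hAnn : 0 ≤ A := Finset.sum_nonneg fun τ _ => sq_nonneg _
  have hNnn : 0 ≤ N := hselfnn w
  have hQnn : 0 ≤ Q := by positivity
  have hQeq : w ⬝ᵥ s = Q := by
    rw [← hΛw, hquad, hQ, hA, hN]
    congr 1
    exact Finset.sum_congr rfl fun τ _ => by
      rw [ha, dotProduct_comm (φ τ) w]; ring
  have hQeq2 : w ⬝ᵥ s = ∑ τ, y τ * a τ := by
    rw [hs, dotProduct_sum']
    exact Finset.sum_congr rfl fun τ _ => by rw [dotProduct_smul, ha, smul_eq_mul]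
  -- Q ≤ 2H * ∑ |a τ|
  have hQle : Q ≤ 2 * H * ∑ τ, |a τ| := by
    rw [← hQeq, hQeq2, Finset.mul_sum]
    refine Finset.sum_le_sum fun τ _ => ?_
    have h1 := (hy τ).1
    have h2 := (hy τ).2
    calc y τ * a τ ≤ y τ * |a τ| := by
          exact mul_le_mul_of_nonneg_left (le_abs_self _) h1
      _ ≤ 2 * H * |a τ| := mul_le_mul_of_nonneg_right h2 (abs_nonneg _)
  -- Cauchy–Schwarz : (∑|a|)² ≤ (k-1) * A ≤ k * A
  have hCS : (∑ τ, |a τ|) ^ 2 ≤ (k : ℝ) * A := by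
    have := sq_sum_le_card_mul_sum_sq (s := Finset.univ)
      (f := fun τ : Fin (k - 1) => |a τ|)
    simp only [Finset.card_univ, Fintype.card_fin, sq_abs] at this
    calc (∑ τ, |a τ|) ^ 2 ≤ ((k - 1 : ℕ) : ℝ) * A := by
          rw [hA]; exact_mod_cast this
      _ ≤ (k : ℝ) * A := by
          apply mul_le_mul_of_nonneg_right _ hAnn
          exact_mod_cast Nat.sub_le k 1
  have habsnn : (0:ℝ) ≤ ∑ τ, |a τ| := Finset.sum_nonneg fun τ _ => abs_nonneg _
  have hknn : (0:ℝ) ≤ (k:ℝ) := Nat.cast_nonneg k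
  -- ∑|a| ≤ √(k*Q)
  have hAQ : A ≤ Q := by rw [hQ]; nlinarith
  have hsum_le : ∑ τ, |a τ| ≤ Real.sqrt ((k : ℝ) * Q) := by
    have h1 : (∑ τ, |a τ|) ^ 2 ≤ (k : ℝ) * Q :=
      le_trans hCS (mul_le_mul_of_nonneg_left hAQ hknn)
    calc ∑ τ, |a τ| = Real.sqrt ((∑ τ, |a τ|) ^ 2) := (Real.sqrt_sq habsnn).symm
      _ ≤ Real.sqrt ((k : ℝ) * Q) := Real.sqrt_le_sqrt h1
  -- Q ≤ 2H √k √Q, hence √Q ≤ 2H√k, hence Q ≤ 4H²k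
  have hQle2 : Q ≤ (2 * H * Real.sqrt k) * Real.sqrt Q := by
    calc Q ≤ 2 * H * ∑ τ, |a τ| := hQle
      _ ≤ 2 * H * Real.sqrt ((k : ℝ) * Q) :=
          mul_le_mul_of_nonneg_left hsum_le (by positivity)
      _ = (2 * H * Real.sqrt k) * Real.sqrt Q := by
          rw [Real.sqrt_mul hknn]; ring
  have hsqrtQ : Real.sqrt Q ≤ 2 * H * Real.sqrt k := by
    rcases (Real.sqrt_nonneg Q).lt_or_eq with hpos | hzero
    · have : Real.sqrt Q * Real.sqrt Q ≤ (2 * H * Real.sqrt k) * Real.sqrt Q := by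
        rw [Real.mul_self_sqrt hQnn]; exact hQle2
      exact le_of_mul_le_mul_right this hpos
    · rw [← hzero]; positivity
  have hQ4 : Q ≤ 4 * H ^ 2 * k := by
    have := Real.sq_sqrt hQnn
    nlinarith [Real.sq_sqrt hknn, Real.sqrt_nonneg (k:ℝ), Real.sqrt_nonneg Q]
  -- conclude
  have hNle : N ≤ (2 * H) ^ 2 * ((k : ℝ) * d / lam) := by
    have hd1 : (1 : ℝ) ≤ (d : ℝ) := by exact_mod_cast hd
    have h1 : lam * N ≤ Q := by rw [hQ]; nlinarith
    rw [div_eq_mul_inv]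
    have h2 : N ≤ Q / lam := (le_div_iff₀ hlam).mpr (by linarith [h1, mul_comm lam N])
    calc N ≤ Q / lam := h2
      _ ≤ 4 * H ^ 2 * k / lam := by gcongr
      _ ≤ (2 * H) ^ 2 * ((k : ℝ) * d * lam⁻¹) := by
          rw [div_eq_mul_inv]
          have : (4 : ℝ) * H ^ 2 * k ≤ (2 * H) ^ 2 * ((k:ℝ) * d) := by nlinarith
          calc (4:ℝ) * H ^ 2 * ↑k * lam⁻¹ ≤ (2 * H) ^ 2 * ((k:ℝ) * d) * lam⁻¹ :=
                mul_le_mul_of_nonneg_right this (by positivity : (0:ℝ) ≤ lam⁻¹)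
            _ = (2 * H) ^ 2 * ((k:ℝ) * d * lam⁻¹) := by ring
  calc Real.sqrt N ≤ Real.sqrt ((2 * H) ^ 2 * ((k : ℝ) * d / lam)) :=
        Real.sqrt_le_sqrt hNle
    _ = 2 * H * Real.sqrt ((k : ℝ) * d / lam) := by
        rw [Real.sqrt_mul (sq_nonneg _), Real.sqrt_sq (by positivity : (0:ℝ) ≤ 2 * H)]
end

section
/- Let λ > 0, let t be a positive integer, let φ_1, …, φ_t ∈ ℝ^d, and set Λ = λ I_d + Σ_{i=1}^{t} φ_i φ_iᵀ. Then Σ_{i=1}^{t} φ_iᵀ Λ^{-1} φ_i ≤ d. -/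
open Matrix

lemma aux_vmv_psd (d : ℕ) (u : Fin d → ℝ) : (vecMulVec u u).PosSemidef := by
  rw [posSemidef_iff_dotProduct_mulVec]
  constructor
  · ext i j; simp [vecMulVec, mul_comm]
  · intro x
    have : x ⬝ᵥ (vecMulVec u u *ᵥ x) = (u ⬝ᵥ x)^2 := by
      simp [dotProduct, mulVec, vecMulVec, Finset.mul_sum, Finset.sum_mul, sq]
      rw [Finset.sum_comm]
      exact Finset.sum_congr rfl fun i _ => Finset.sum_congr rfl fun j _ => by ring
    simp only [star_trivial]
    rw [this]; positivity

lemma aux_trace_mul_vmv (d : ℕ) (A : Matrix (Fin d) (Fin d) ℝ) (u : Fin d → ℝ) :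
    trace (A * vecMulVec u u) = u ⬝ᵥ (A *ᵥ u) := by
  simp [trace, Matrix.mul_apply, vecMulVec, dotProduct, mulVec, Finset.mul_sum, diag]
  exact Finset.sum_congr rfl fun i _ => Finset.sum_congr rfl fun j _ => by ring

/-- Lemma D.1 of Jin et al.: with `Λ = λ I + ∑ φᵢ φᵢᵀ` (λ > 0), one has
`∑ᵢ φᵢᵀ Λ⁻¹ φᵢ ≤ d`. -/
theorem stmt_9 (d t : ℕ) (ht : 0 < t) (lam : ℝ) (hlam : 0 < lam)
    (φ : Fin t → Fin d → ℝ) :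
    ∑ i, φ i ⬝ᵥ
        ((lam • (1 : Matrix (Fin d) (Fin d) ℝ) + ∑ j, vecMulVec (φ j) (φ j))⁻¹ *ᵥ φ i)
      ≤ (d : ℝ) := by
  set S : Matrix (Fin d) (Fin d) ℝ := ∑ j, vecMulVec (φ j) (φ j) with hS
  set Λ : Matrix (Fin d) (Fin d) ℝ := lam • 1 + S with hΛdef
  have hSpsd : S.PosSemidef := by
    rw [hS]
    apply Finset.sum_induction _ _ (fun a b ha hb => ha.add hb)
    · have h0 : vecMulVec (0 : Fin d → ℝ) (0 : Fin d → ℝ) = (0 : Matrix (Fin d) (Fin d) ℝ) := by ext i j; simp [vecMulVec]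
      simpa [h0] using aux_vmv_psd d 0
    · intro j _; exact aux_vmv_psd d (φ j)
  have h1 : (lam • (1 : Matrix (Fin d) (Fin d) ℝ)).PosDef := by
    rw [smul_one_eq_diagonal]
    exact posDef_diagonal_iff.mpr fun i => hlam
  have hΛ : Λ.PosDef := h1.add_posSemidef hSpsd
  have hinv : Λ⁻¹.PosDef := hΛ.inv
  have hunit : IsUnit Λ.det := hΛ.det_pos.ne'.isUnit
  have hmul : Λ⁻¹ * Λ = 1 := nonsing_inv_mul Λ hunit
  have key : ∑ i, φ i ⬝ᵥ (Λ⁻¹ *ᵥ φ i) = trace (Λ⁻¹ * S) := by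
    rw [hS, Finset.mul_sum, trace_sum]
    exact Finset.sum_congr rfl fun i _ => (aux_trace_mul_vmv d Λ⁻¹ (φ i)).symm
  rw [key]
  have hSeq : S = Λ - lam • 1 := by rw [hΛdef]; abel
  have htr : trace (Λ⁻¹ * S) = (d : ℝ) - lam * trace Λ⁻¹ := by
    rw [hSeq, Matrix.mul_sub, trace_sub, hmul, trace_one, Matrix.mul_smul, trace_smul]
    simp [smul_eq_mul]
  have htrnn : 0 ≤ trace Λ⁻¹ := by
    rw [trace]
    apply Finset.sum_nonneg
    intro k _
    have := hinv.posSemidef.dotProduct_mulVec_nonneg (Pi.single k 1)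
    simpa [star_trivial, dotProduct, mulVec, Pi.single_apply, diag] using this
  rw [htr]
  nlinarith
end

section
/- Let K be a positive integer and let φ_1, …, φ_K ∈ ℝ^d with ‖φ_k‖ ≤ 1 for all k. For each k ∈ {1, …, K}, set Λ_k = I_d + Σ_{τ=1}^{k-1} φ_τ φ_τᵀ. Then Σ_{k=1}^{K} √( φ_kᵀ (Λ_k)^{-1} φ_k ) ≤ √( 2 d K log(1 + K) ). -/
open Matrix

section Stmt11Aux

lemma stmt11_psd_vmv {d : ℕ} (v : Fin d → ℝ) : (vecMulVec v v).PosSemidef := by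
  refine Matrix.posSemidef_iff_dotProduct_mulVec.mpr ⟨?_, ?_⟩
  · ext i j
    simp [vecMulVec, conjTranspose_apply, mul_comm]
  · intro x
    have h : vecMulVec v v *ᵥ x = (v ⬝ᵥ x) • v := by
      ext i
      simp [vecMulVec, mulVec, dotProduct, Finset.mul_sum, mul_comm, mul_assoc, mul_left_comm]
    rw [h]
    have h2 : star x ⬝ᵥ ((v ⬝ᵥ x) • v) = (v ⬝ᵥ x) * (v ⬝ᵥ x) := by
      simp [dotProduct_smul, dotProduct_comm, star_trivial]
    rw [h2]
    exact mul_self_nonneg _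

lemma stmt11_log2 {x : ℝ} (h0 : 0 ≤ x) (h1 : x ≤ 1) : x ≤ 2 * Real.log (1 + x) := by
  have hp : (0:ℝ) < 1 + x := by linarith
  have h := Real.one_sub_inv_le_log_of_pos hp
  have hinv : (1 + x) * (1 + x)⁻¹ = 1 := mul_inv_cancel₀ hp.ne'
  nlinarith [mul_pos hp hp, sq_nonneg x, inv_nonneg.mpr hp.le]

noncomputable def stmt11AM {d : ℕ} (ψ : ℕ → Fin d → ℝ) (n : ℕ) : Matrix (Fin d) (Fin d) ℝ :=
  1 + ∑ τ ∈ Finset.range n, vecMulVec (ψ τ) (ψ τ)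

lemma stmt11_S_psd {d : ℕ} (ψ : ℕ → Fin d → ℝ) (n : ℕ) :
    (∑ τ ∈ Finset.range n, vecMulVec (ψ τ) (ψ τ)).PosSemidef := by
  induction n with
  | zero => simpa using Matrix.PosSemidef.zero
  | succ n ih => rw [Finset.sum_range_succ]; exact ih.add (stmt11_psd_vmv _)

lemma stmt11AM_posdef {d : ℕ} (ψ : ℕ → Fin d → ℝ) (n : ℕ) : (stmt11AM ψ n).PosDef :=
  Matrix.PosDef.one.add_posSemidef (stmt11_S_psd ψ n)

lemma stmt11AM_det_unit {d : ℕ} (ψ : ℕ → Fin d → ℝ) (n : ℕ) : IsUnit (stmt11AM ψ n).det :=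
  isUnit_iff_ne_zero.mpr (stmt11AM_posdef ψ n).det_pos.ne'

lemma stmt11_x {d : ℕ} (ψ : ℕ → Fin d → ℝ) (n : ℕ) :
    0 ≤ ψ n ⬝ᵥ ((stmt11AM ψ n)⁻¹ *ᵥ ψ n) ∧
      ψ n ⬝ᵥ ((stmt11AM ψ n)⁻¹ *ᵥ ψ n) ≤ ψ n ⬝ᵥ ψ n := by
  set S := ∑ τ ∈ Finset.range n, vecMulVec (ψ τ) (ψ τ) with hS
  set y := (stmt11AM ψ n)⁻¹ *ᵥ ψ n with hy
  have hA : stmt11AM ψ n *ᵥ y = ψ n := by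
    rw [hy, mulVec_mulVec, Matrix.mul_nonsing_inv _ (stmt11AM_det_unit ψ n), one_mulVec]
  have hψ : ψ n = y + S *ᵥ y := by
    rw [← hA]; rw [stmt11AM, add_mulVec, one_mulVec]
  have h1 : 0 ≤ y ⬝ᵥ (S *ᵥ y) := by simpa using (stmt11_S_psd ψ n).dotProduct_mulVec_nonneg y
  have h2 : 0 ≤ y ⬝ᵥ y := Finset.sum_nonneg fun i _ => mul_self_nonneg _
  have h3 : 0 ≤ (S *ᵥ y) ⬝ᵥ (S *ᵥ y) := Finset.sum_nonneg fun i _ => mul_self_nonneg _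
  have e1 : ψ n ⬝ᵥ y = y ⬝ᵥ y + y ⬝ᵥ (S *ᵥ y) := by
    rw [hψ, add_dotProduct, dotProduct_comm (S *ᵥ y) y]
  have e2 : ψ n ⬝ᵥ ψ n = y ⬝ᵥ y + 2 * (y ⬝ᵥ (S *ᵥ y)) + (S *ᵥ y) ⬝ᵥ (S *ᵥ y) := by
    rw [hψ]
    rw [add_dotProduct, dotProduct_add, dotProduct_add, dotProduct_comm (S *ᵥ y) y]
    ring
  constructor
  · rw [e1] at *; linarith
  · rw [e1, e2]; linarith

lemma stmt11AM_det_succ {d : ℕ} (ψ : ℕ → Fin d → ℝ) (n : ℕ) :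
    (stmt11AM ψ (n+1)).det
      = (stmt11AM ψ n).det * (1 + ψ n ⬝ᵥ ((stmt11AM ψ n)⁻¹ *ᵥ ψ n)) := by
  have h : stmt11AM ψ (n+1)
      = stmt11AM ψ n + Matrix.replicateCol (Fin 1) (ψ n) * Matrix.replicateRow (Fin 1) (ψ n) := by
    rw [stmt11AM, stmt11AM, Finset.sum_range_succ, ← add_assoc, vecMulVec_eq (Fin 1)]
    rfl
  rw [h]; erw [Matrix.det_add_replicateCol_mul_replicateRow (ι := Fin 1) (stmt11AM_det_unit ψ n)]
  congr 1
  rw [Matrix.mul_assoc, ← Matrix.replicateCol_mulVec]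
  simp [Matrix.det_unique]

lemma stmt11AM_log_det {d : ℕ} (ψ : ℕ → Fin d → ℝ) (n : ℕ) :
    Real.log (stmt11AM ψ n).det
      = ∑ k ∈ Finset.range n, Real.log (1 + ψ k ⬝ᵥ ((stmt11AM ψ k)⁻¹ *ᵥ ψ k)) := by
  induction n with
  | zero => simp [stmt11AM]
  | succ n ih =>
      rw [Finset.sum_range_succ, ← ih, stmt11AM_det_succ,
        Real.log_mul (stmt11AM_posdef ψ n).det_pos.ne'
          (by have := (stmt11_x ψ n).1; positivity)]

lemma stmt11AM_trace {d : ℕ} (ψ : ℕ → Fin d → ℝ) (n : ℕ) :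
    (stmt11AM ψ n).trace = d + ∑ k ∈ Finset.range n, ψ k ⬝ᵥ ψ k := by
  rw [stmt11AM, Matrix.trace_add, Matrix.trace_one, Matrix.trace_sum]
  simp only [Fintype.card_fin]
  refine congrArg (fun t => (d:ℝ) + t) ?_
  exact Finset.sum_congr rfl fun k _ => by
    simp [Matrix.trace, vecMulVec, dotProduct, Matrix.diag]

lemma stmt11_trace_eq_sum_eig {d : ℕ} {A : Matrix (Fin d) (Fin d) ℝ} (hA : A.IsHermitian) :
    A.trace = ∑ i, hA.eigenvalues i := by
  rw [hA.trace_eq_sum_eigenvalues]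
  simp

lemma stmt11_det_le_pow {d : ℕ} (hd : 0 < d) {A : Matrix (Fin d) (Fin d) ℝ}
    (hA : A.PosSemidef) {c : ℝ} (hc : A.trace ≤ d * c) : A.det ≤ c ^ d := by
  have hH := hA.isHermitian
  set z := hH.eigenvalues with hz
  have hev : ∀ i, 0 ≤ z i := hA.eigenvalues_nonneg
  have hdet : A.det = ∏ i, z i := by simpa using hH.det_eq_prod_eigenvalues
  have htr : A.trace = ∑ i, z i := stmt11_trace_eq_sum_eig hH
  have hd0 : (d : ℝ) ≠ 0 := Nat.cast_ne_zero.mpr hd.ne'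
  have hdpos : (0:ℝ) < d := Nat.cast_pos.mpr hd
  have hc0 : 0 ≤ c := by
    have h1 : (0:ℝ) ≤ ∑ i, z i := Finset.sum_nonneg fun i _ => hev i
    nlinarith
  have amgm : ∏ i, z i ^ ((d:ℝ)⁻¹) ≤ ∑ i, (d:ℝ)⁻¹ * z i :=
    Real.geom_mean_le_arith_mean_weighted Finset.univ (fun _ => (d:ℝ)⁻¹) z
      (fun i _ => by positivity)
      (by simp [Finset.sum_const, Fintype.card_fin]; field_simp)
      (fun i _ => hev i)
  have hsum : ∑ i, (d:ℝ)⁻¹ * z i ≤ c := by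
    rw [← Finset.mul_sum, ← htr]
    rw [inv_mul_le_iff₀ hdpos]
    linarith
  have hP0 : 0 ≤ ∏ i, z i ^ ((d:ℝ)⁻¹) :=
    Finset.prod_nonneg fun i _ => Real.rpow_nonneg (hev i) _
  have key : (∏ i, z i ^ ((d:ℝ)⁻¹)) ^ d = ∏ i, z i := by
    rw [← Finset.prod_pow]
    refine Finset.prod_congr rfl fun i _ => ?_
    rw [← Real.rpow_natCast (z i ^ ((d:ℝ)⁻¹)) d, ← Real.rpow_mul (hev i),
      inv_mul_cancel₀ hd0, Real.rpow_one]
  calc A.det = (∏ i, z i ^ ((d:ℝ)⁻¹)) ^ d := by rw [key, hdet]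
    _ ≤ c ^ d := pow_le_pow_left₀ hP0 (amgm.trans hsum) d

end Stmt11Aux

/-- With `‖φ_k‖ ≤ 1` and `Λ_k = I + ∑_{τ<k} φ_τ φ_τᵀ`, one has
`∑_k √(φ_kᵀ Λ_k⁻¹ φ_k) ≤ √(2 d K log(1 + K))`. -/
theorem stmt_11 (d K : ℕ) (hK : 0 < K)
    (φ : Fin K → Fin d → ℝ) (hφ : ∀ k, Real.sqrt (φ k ⬝ᵥ φ k) ≤ 1) :
    ∑ k : Fin K,
        Real.sqrt (φ k ⬝ᵥ
          (((1 : Matrix (Fin d) (Fin d) ℝ)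
              + ∑ τ ∈ Finset.Iio k, vecMulVec (φ τ) (φ τ))⁻¹ *ᵥ φ k))
      ≤ Real.sqrt (2 * d * K * Real.log (1 + K)) := by
  classical
  by_cases hd : d = 0
  · subst hd
    have h0 : ∀ k : Fin K, (φ k ⬝ᵥ
        (((1 : Matrix (Fin 0) (Fin 0) ℝ)
            + ∑ τ ∈ Finset.Iio k, vecMulVec (φ τ) (φ τ))⁻¹ *ᵥ φ k)) = 0 := by
      intro k; simp [dotProduct]
    calc ∑ k : Fin K, Real.sqrt (φ k ⬝ᵥ
          (((1 : Matrix (Fin 0) (Fin 0) ℝ)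
              + ∑ τ ∈ Finset.Iio k, vecMulVec (φ τ) (φ τ))⁻¹ *ᵥ φ k))
        = 0 := by
          refine Finset.sum_eq_zero fun k _ => ?_
          rw [h0 k, Real.sqrt_zero]
      _ ≤ _ := Real.sqrt_nonneg _
  set ψ : ℕ → Fin d → ℝ := fun n => if h : n < K then φ ⟨n, h⟩ else 0 with hψdef
  have hψ_le : ∀ n, ψ n ⬝ᵥ ψ n ≤ 1 := by
    intro n
    by_cases h : n < K
    · have hb := hφ ⟨n, h⟩
      have h0 : 0 ≤ φ ⟨n, h⟩ ⬝ᵥ φ ⟨n, h⟩ := Finset.sum_nonneg fun i _ => mul_self_nonneg _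
      calc ψ n ⬝ᵥ ψ n = φ ⟨n, h⟩ ⬝ᵥ φ ⟨n, h⟩ := by simp [hψdef, h]
        _ = (Real.sqrt (φ ⟨n, h⟩ ⬝ᵥ φ ⟨n, h⟩)) ^ 2 := (Real.sq_sqrt h0).symm
        _ ≤ 1 := by nlinarith [Real.sqrt_nonneg (φ ⟨n, h⟩ ⬝ᵥ φ ⟨n, h⟩)]
    · simp [hψdef, h, dotProduct]
  set x : ℕ → ℝ := fun n => ψ n ⬝ᵥ ((stmt11AM ψ n)⁻¹ *ᵥ ψ n) with hxdef
  have hx0 : ∀ n, 0 ≤ x n := fun n => (stmt11_x ψ n).1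
  have hx1 : ∀ n, x n ≤ 1 := fun n => le_trans (stmt11_x ψ n).2 (hψ_le n)
  have hd1 : (1:ℝ) ≤ d := by exact_mod_cast Nat.one_le_iff_ne_zero.mpr hd
  have hK0 : (0:ℝ) ≤ K := Nat.cast_nonneg K
  have htr : (stmt11AM ψ K).trace ≤ d * (1 + K) := by
    rw [stmt11AM_trace]
    have hs : ∑ k ∈ Finset.range K, ψ k ⬝ᵥ ψ k ≤ K := by
      calc ∑ k ∈ Finset.range K, ψ k ⬝ᵥ ψ k ≤ ∑ _k ∈ Finset.range K, (1:ℝ) :=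
            Finset.sum_le_sum fun k _ => hψ_le k
        _ = K := by simp
    nlinarith
  have hdetle : (stmt11AM ψ K).det ≤ (1 + K) ^ d :=
    stmt11_det_le_pow (Nat.pos_of_ne_zero hd) (stmt11AM_posdef ψ K).posSemidef htr
  have hlog : ∑ k ∈ Finset.range K, Real.log (1 + x k) ≤ d * Real.log (1 + K) := by
    rw [← stmt11AM_log_det]
    calc Real.log (stmt11AM ψ K).det ≤ Real.log ((1 + (K:ℝ)) ^ d) :=
          Real.log_le_log (stmt11AM_posdef ψ K).det_pos hdetle
      _ = d * Real.log (1 + K) := by rw [Real.log_pow]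
  have hsx : ∑ k ∈ Finset.range K, x k ≤ 2 * (d * Real.log (1 + K)) := by
    calc ∑ k ∈ Finset.range K, x k ≤ ∑ k ∈ Finset.range K, 2 * Real.log (1 + x k) :=
          Finset.sum_le_sum fun k _ => stmt11_log2 (hx0 k) (hx1 k)
      _ = 2 * ∑ k ∈ Finset.range K, Real.log (1 + x k) := by rw [Finset.mul_sum]
      _ ≤ _ := by linarith
  have hmat : ∀ k : Fin K,
      ∑ τ ∈ Finset.range (k:ℕ), vecMulVec (ψ τ) (ψ τ)
        = ∑ τ ∈ Finset.Iio k, vecMulVec (φ τ) (φ τ) := by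
    intro k
    rw [← Nat.Iio_eq_range, ← Fin.map_valEmbedding_Iio, Finset.sum_map]
    refine Finset.sum_congr rfl fun τ _ => ?_
    simp [hψdef, τ.is_lt]
  have hLHS : (∑ k : Fin K, Real.sqrt (φ k ⬝ᵥ
        (((1 : Matrix (Fin d) (Fin d) ℝ)
            + ∑ τ ∈ Finset.Iio k, vecMulVec (φ τ) (φ τ))⁻¹ *ᵥ φ k)))
      = ∑ k ∈ Finset.range K, Real.sqrt (x k) := by
    rw [← Fin.sum_univ_eq_sum_range]
    refine Finset.sum_congr rfl fun k _ => ?_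
    have h1 : ψ (k:ℕ) = φ k := by simp [hψdef, k.is_lt]
    rw [hxdef]
    simp only []
    rw [h1, stmt11AM, hmat k]
  rw [hLHS]
  have hcs : ∑ k ∈ Finset.range K, Real.sqrt (x k)
      ≤ Real.sqrt (K * ∑ k ∈ Finset.range K, x k) := by
    refine Real.le_sqrt_of_sq_le ?_
    calc (∑ k ∈ Finset.range K, Real.sqrt (x k)) ^ 2
        ≤ (Finset.range K).card * ∑ k ∈ Finset.range K, (Real.sqrt (x k)) ^ 2 :=
          sq_sum_le_card_mul_sum_sq
      _ = K * ∑ k ∈ Finset.range K, x k := by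
          rw [Finset.card_range]
          exact congrArg (fun t => (K:ℝ) * t)
            (Finset.sum_congr rfl fun k _ => Real.sq_sqrt (hx0 k))
  refine hcs.trans (Real.sqrt_le_sqrt ?_)
  have := mul_le_mul_of_nonneg_left hsx hK0
  nlinarith [this]
end
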